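/- Let n ≥ 1, let e ∈ ℝⁿ be the all-ones vector, let α > 0 and β > 0 satisfy 2α > 3β^{3/2}√n, let a ∈ ℝⁿ, and define f : ℝⁿ → ℝ by f(x) := ⟨a, x⟩ + α⟨x, x⟩ + (β/√(1 + β⟨x, x⟩))·⟨e, x⟩. Then the Hessian of f satisfies (2α − 3β^{3/2}√n)‖v‖² ≤ ⟨∇²f(x)v, v⟩ ≤ (2α + 3β^{3/2}√n)‖v‖² for all x ∈ ℝⁿ₊ and all v ∈ ℝⁿ; consequently f is M-strongly convex on ℝⁿ₊ with M = 2α − 3β^{3/2}√n > 0. -/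

import Mathlib

open scoped RealInnerProductSpace

lemma aux_sqrt_pos {β s : ℝ} (hβ : 0 < β) (hs : 0 ≤ s) : 0 < Real.sqrt (1 + β * s) := by
  apply Real.sqrt_pos.2; nlinarith

lemma aux_hasDerivAt_h {β : ℝ} (hβ : 0 < β) {s : ℝ} (hs : 0 ≤ s) :
    HasDerivAt (fun s => β / Real.sqrt (1 + β * s))
      (-β ^ 2 / (2 * Real.sqrt (1 + β * s) ^ 3)) s := by
  have h1 : (0:ℝ) < 1 + β * s := by nlinarith
  have hr := aux_sqrt_pos hβ hs
  have hu : HasDerivAt (fun s : ℝ => 1 + β * s) β s := by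
    simpa using ((hasDerivAt_id s).const_mul β).const_add 1
  have hsq : HasDerivAt (fun s : ℝ => Real.sqrt (1 + β * s))
      (β / (2 * Real.sqrt (1 + β * s))) s := by
    exact ((Real.hasDerivAt_sqrt h1.ne').comp s hu).congr_deriv (by ring)
  have := ((hsq.inv hr.ne').const_mul β)
  convert this using 1
  any_goals rfl
  have hrs : Real.sqrt (1 + β * s) ^ 2 = 1 + β * s := Real.sq_sqrt h1.le
  field_simp

lemma aux_hasDerivAt_h' {β : ℝ} (hβ : 0 < β) {s : ℝ} (hs : 0 ≤ s) :
    HasDerivAt (fun s => -β ^ 2 / (2 * Real.sqrt (1 + β * s) ^ 3))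
      (3 * β ^ 3 / (4 * Real.sqrt (1 + β * s) ^ 5)) s := by
  have h1 : (0:ℝ) < 1 + β * s := by nlinarith
  have hr := aux_sqrt_pos hβ hs
  have hu : HasDerivAt (fun s : ℝ => 1 + β * s) β s := by
    simpa using ((hasDerivAt_id s).const_mul β).const_add 1
  have hsq : HasDerivAt (fun s : ℝ => Real.sqrt (1 + β * s))
      (β / (2 * Real.sqrt (1 + β * s))) s := by
    exact ((Real.hasDerivAt_sqrt h1.ne').comp s hu).congr_deriv (by ring)
  have hcube : HasDerivAt (fun s : ℝ => Real.sqrt (1 + β * s) ^ 3)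
      (3 * Real.sqrt (1 + β * s) ^ 2 * (β / (2 * Real.sqrt (1 + β * s)))) s := by
    exact (hsq.pow 3).congr_deriv (by norm_num)
  have h3 : (2:ℝ) * Real.sqrt (1 + β * s) ^ 3 ≠ 0 := by positivity
  have hmul : HasDerivAt (fun s : ℝ => 2 * Real.sqrt (1 + β * s) ^ 3)
      (2 * (3 * Real.sqrt (1 + β * s) ^ 2 * (β / (2 * Real.sqrt (1 + β * s))))) s :=
    hcube.const_mul 2
  have := (hmul.inv h3).const_mul (-β ^ 2)
  convert this using 1
  any_goals rfl
  have hrs : Real.sqrt (1 + β * s) ^ 2 = 1 + β * s := Real.sq_sqrt h1.le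
  field_simp
  norm_num


section
variable {E : Type*} [NormedAddCommGroup E] [InnerProductSpace ℝ E]

lemma aux_inner_self_fderiv (x : E) :
    HasFDerivAt (fun z : E => ⟪z, z⟫) (2 • innerSL ℝ x) x := by
  have : (fun z : E => ⟪z, z⟫) = fun z : E => ‖z‖ ^ 2 := by
    funext z; rw [real_inner_self_eq_norm_sq]
  rw [this]
  exact (hasStrictFDerivAt_norm_sq x).hasFDerivAt

noncomputable def auxDg (a e : E) (α β : ℝ) (x : E) : E →L[ℝ] ℝ :=
  innerSL ℝ a
    + (2 * α + 2 * (-β ^ 2 / (2 * Real.sqrt (1 + β * ⟪x, x⟫) ^ 3)) * ⟪e, x⟫) • innerSL ℝ x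
    + (β / Real.sqrt (1 + β * ⟪x, x⟫)) • innerSL ℝ e

lemma aux_hasFDerivAt_g (a e : E) (α β : ℝ) (hβ : 0 < β) (x : E) :
    HasFDerivAt (fun z : E => ⟪a, z⟫ + α * ⟪z, z⟫
        + (β / Real.sqrt (1 + β * ⟪z, z⟫)) * ⟪e, z⟫)
      (auxDg a e α β x) x := by
  have hs : (0:ℝ) ≤ ⟪x, x⟫ := real_inner_self_nonneg
  have h1 : HasFDerivAt (fun z : E => ⟪a, z⟫) (innerSL ℝ a) x := (innerSL ℝ a).hasFDerivAt
  have h2 := aux_inner_self_fderiv x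
  have h3 : HasFDerivAt (fun z : E => ⟪e, z⟫) (innerSL ℝ e) x := (innerSL ℝ e).hasFDerivAt
  have hc : HasFDerivAt (fun z : E => β / Real.sqrt (1 + β * ⟪z, z⟫))
      ((-β ^ 2 / (2 * Real.sqrt (1 + β * ⟪x, x⟫) ^ 3)) • (2 • innerSL ℝ x)) x :=
    HasDerivAt.comp_hasFDerivAt (f := fun z : E => ⟪z, z⟫) x (aux_hasDerivAt_h hβ hs) h2
  have := ((h1.add (h2.const_mul α)).add (hc.mul h3))
  refine this.congr_fderiv ?_
  ext v
  simp [auxDg, ContinuousLinearMap.add_apply, ContinuousLinearMap.smul_apply,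
    innerSL_apply_apply, smul_eq_mul]
  ring
end

section
variable {E : Type*} [NormedAddCommGroup E] [InnerProductSpace ℝ E]

noncomputable def auxH1 (β : ℝ) (x : E) : ℝ := -β ^ 2 / (2 * Real.sqrt (1 + β * ⟪x, x⟫) ^ 3)
noncomputable def auxH2 (β : ℝ) (x : E) : ℝ := 3 * β ^ 3 / (4 * Real.sqrt (1 + β * ⟪x, x⟫) ^ 5)

noncomputable def auxInner : E →L[ℝ] E →L[ℝ] ℝ := innerSL ℝ

noncomputable def auxB (a e : E) (α β : ℝ) (x : E) : E →L[ℝ] E →L[ℝ] ℝ :=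
  ((4 * auxH2 β x * ⟪e, x⟫) • innerSL ℝ x + (2 * auxH1 β x) • innerSL ℝ e).smulRight
      (innerSL ℝ x)
    + (2 * α + 2 * auxH1 β x * ⟪e, x⟫) • (auxInner : E →L[ℝ] E →L[ℝ] ℝ)
    + ((2 * auxH1 β x) • innerSL ℝ x).smulRight (innerSL ℝ e)

lemma aux_hasFDerivAt_Dg (a e : E) (α β : ℝ) (hβ : 0 < β) (x : E) :
    HasFDerivAt (fun z : E => auxDg a e α β z) (auxB a e α β x) x := by
  have hs : (0:ℝ) ≤ ⟪x, x⟫ := real_inner_self_nonneg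
  have h2 := aux_inner_self_fderiv x
  have h3 : HasFDerivAt (fun z : E => ⟪e, z⟫) (innerSL ℝ e) x := (innerSL ℝ e).hasFDerivAt
  -- derivative of z ↦ auxH1 β z
  have hH1 : HasFDerivAt (fun z : E => auxH1 β z) (auxH2 β x • (2 • innerSL ℝ x)) x := by
    have := HasDerivAt.comp_hasFDerivAt (f := fun z : E => ⟪z, z⟫) x
      (aux_hasDerivAt_h' hβ hs) h2
    exact this
  -- derivative of z ↦ β / √(1 + β⟪z,z⟫)
  have hc : HasFDerivAt (fun z : E => β / Real.sqrt (1 + β * ⟪z, z⟫))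
      (auxH1 β x • (2 • innerSL ℝ x)) x :=
    HasDerivAt.comp_hasFDerivAt (f := fun z : E => ⟪z, z⟫) x (aux_hasDerivAt_h hβ hs) h2
  -- derivative of c₁ z = 2α + 2 * auxH1 β z * ⟪e, z⟫
  have hc1 : HasFDerivAt (fun z : E => 2 * α + 2 * auxH1 β z * ⟪e, z⟫)
      ((2 * auxH1 β x) • innerSL ℝ e
        + ⟪e, x⟫ • ((2:ℝ) • (auxH2 β x • (2 • innerSL ℝ x)))) x := by
    have := (((hH1.const_mul (2:ℝ)).mul h3).const_add (2 * α))
    exact this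
  have hid : HasFDerivAt (fun z : E => ((innerSL ℝ z : E →L[ℝ] ℝ))) (auxInner (E := E)) x :=
    (auxInner (E := E)).hasFDerivAt
  have hce : HasFDerivAt (fun z : E => (innerSL ℝ e : E →L[ℝ] ℝ))
      (0 : E →L[ℝ] E →L[ℝ] ℝ) x := hasFDerivAt_const _ _
  have ha' : HasFDerivAt (fun z : E => (innerSL ℝ a : E →L[ℝ] ℝ))
      (0 : E →L[ℝ] E →L[ℝ] ℝ) x := hasFDerivAt_const _ _
  have := (ha'.add (hc1.smul hid)).add (hc.smul hce)
  refine this.congr_fderiv ?_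
  ext v w
  simp [auxB, auxInner, ContinuousLinearMap.smulRight_apply, ContinuousLinearMap.add_apply,
    ContinuousLinearMap.smul_apply, innerSL_apply_apply, smul_eq_mul]
  ring
end

section
variable {E : Type*} [NormedAddCommGroup E] [InnerProductSpace ℝ E]

lemma aux_Bvv (a e : E) (α β : ℝ) (x v : E) :
    auxB a e α β x v v
      = 2 * α * ⟪v, v⟫ + 4 * auxH2 β x * ⟪x, v⟫ ^ 2 * ⟪e, x⟫
        + 2 * auxH1 β x * ⟪v, v⟫ * ⟪e, x⟫ + 4 * auxH1 β x * ⟪x, v⟫ * ⟪e, v⟫ := by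
  simp [auxB, auxInner, ContinuousLinearMap.smulRight_apply,
    ContinuousLinearMap.add_apply, ContinuousLinearMap.smul_apply, innerSL_apply_apply, smul_eq_mul]
  erw [innerSL_apply_apply]
  rw [real_inner_self_eq_norm_sq]
  ring

lemma aux_iterated (a e : E) (α β : ℝ) (hβ : 0 < β) (x v : E) :
    iteratedFDeriv ℝ 2 (fun z : E => ⟪a, z⟫ + α * ⟪z, z⟫
        + (β / Real.sqrt (1 + β * ⟪z, z⟫)) * ⟪e, z⟫) x ![v, v]
      = auxB a e α β x v v := by
  rw [iteratedFDeriv_two_apply]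
  have hfd : fderiv ℝ (fun z : E => ⟪a, z⟫ + α * ⟪z, z⟫
      + (β / Real.sqrt (1 + β * ⟪z, z⟫)) * ⟪e, z⟫) = fun z => auxDg a e α β z :=
    funext fun z => (aux_hasFDerivAt_g a e α β hβ z).fderiv
  rw [hfd, (aux_hasFDerivAt_Dg a e α β hβ x).fderiv]
  simp
end

lemma aux_core {β c : ℝ} (hβ : 0 < β) (hc : 0 ≤ c) :
    3 * β ^ 3 * c ^ 3 / Real.sqrt (1 + β * c ^ 2) ^ 5
      + 3 * β ^ 2 * c / Real.sqrt (1 + β * c ^ 2) ^ 3 ≤ 3 * (β * Real.sqrt β) := by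
  set r := Real.sqrt (1 + β * c ^ 2) with hr
  have hr1 : 1 ≤ r := by
    rw [hr]
    have h01 : (1:ℝ) ≤ 1 + β * c ^ 2 := by nlinarith
    nlinarith [Real.sq_sqrt (by linarith : (0:ℝ) ≤ 1 + β * c ^ 2),
      Real.sqrt_nonneg (1 + β * c ^ 2)]
  have hr0 : (0:ℝ) < r := lt_of_lt_of_le one_pos hr1
  have hr2 : r ^ 2 = 1 + β * c ^ 2 := Real.sq_sqrt (by nlinarith)
  set b := Real.sqrt β * c with hb
  have hb0 : 0 ≤ b := by positivity
  have hsb : Real.sqrt β ^ 2 = β := Real.sq_sqrt hβ.le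
  have hpow : Real.sqrt β ^ 4 = β ^ 2 := by
    rw [show (4:ℕ) = 2 * 2 from rfl, pow_mul, hsb]
  have hb2 : b ^ 2 = β * c ^ 2 := by rw [hb, mul_pow, hsb]
  have hrb : r ^ 2 = 1 + b ^ 2 := by rw [hr2, hb2]
  have hr5' : r ^ 4 ≤ r ^ 5 := by
    nlinarith [mul_nonneg (pow_nonneg hr0.le 4) (sub_nonneg.2 hr1)]
  have hr4 : r ^ 4 = (1 + b ^ 2) ^ 2 := by rw [show (4:ℕ) = 2 * 2 from rfl, pow_mul, hrb]
  have hkey : b ^ 3 + b * r ^ 2 ≤ r ^ 5 := by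
    nlinarith [sq_nonneg (b ^ 2 - b), sq_nonneg (b - 1/2), hb0]
  have h3 : 3 * β ^ 3 * c ^ 3 = 3 * (β * Real.sqrt β) * b ^ 3 := by
    rw [hb, mul_pow]
    linear_combination (-3 * β * c ^ 3) * hpow
  have h4 : 3 * β ^ 2 * c = 3 * (β * Real.sqrt β) * b := by
    rw [hb]
    linear_combination (-3 * β * c) * hsb
  rw [h3, h4]
  have hsβ : 0 < Real.sqrt β := Real.sqrt_pos.2 hβ
  have hM : 0 < 3 * (β * Real.sqrt β) := by positivity
  rw [div_add_div _ _ (by positivity : (r:ℝ) ^ 5 ≠ 0) (by positivity : (r:ℝ) ^ 3 ≠ 0),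
    div_le_iff₀ (by positivity)]
  have hmul := mul_le_mul_of_nonneg_left hkey
    (show (0:ℝ) ≤ 3 * (β * Real.sqrt β) * r ^ 3 by positivity)
  nlinarith [hmul]

lemma aux_est {β c r N V p q u : ℝ} (hβ : 0 < β) (hc : 0 ≤ c)
    (hr : r = Real.sqrt (1 + β * c ^ 2)) (hN : 0 ≤ N) (hV : 0 ≤ V)
    (hp : |p| ≤ c * V) (hq : |q| ≤ N * c) (hu : |u| ≤ N * V) :
    |4 * (3 * β ^ 3 / (4 * r ^ 5)) * p ^ 2 * q + 2 * (-β ^ 2 / (2 * r ^ 3)) * V ^ 2 * q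
      + 4 * (-β ^ 2 / (2 * r ^ 3)) * p * u| ≤ 3 * (β * Real.sqrt β) * N * V ^ 2 := by
  have hr1 : 1 ≤ r := by
    rw [hr]
    nlinarith [Real.sq_sqrt (by nlinarith : (0:ℝ) ≤ 1 + β * c ^ 2),
      Real.sqrt_nonneg (1 + β * c ^ 2)]
  have hr0 : (0:ℝ) < r := lt_of_lt_of_le one_pos hr1
  have hp0 : 0 ≤ |p| := abs_nonneg p
  have hEq : 4 * (3 * β ^ 3 / (4 * r ^ 5)) * p ^ 2 * q + 2 * (-β ^ 2 / (2 * r ^ 3)) * V ^ 2 * q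
      + 4 * (-β ^ 2 / (2 * r ^ 3)) * p * u
      = (3 * β ^ 3 / r ^ 5 * p ^ 2 * q) + (-(β ^ 2 / r ^ 3 * V ^ 2 * q))
        + (-(2 * β ^ 2 / r ^ 3 * (p * u))) := by
    field_simp
    ring
  rw [hEq]
  have habs := abs_add_three (3 * β ^ 3 / r ^ 5 * p ^ 2 * q) (-(β ^ 2 / r ^ 3 * V ^ 2 * q))
    (-(2 * β ^ 2 / r ^ 3 * (p * u)))
  rw [abs_neg, abs_neg] at habs
  have e1 : |3 * β ^ 3 / r ^ 5 * p ^ 2 * q| ≤ 3 * β ^ 3 * c ^ 3 / r ^ 5 * (N * V ^ 2) := by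
    rw [abs_mul, abs_mul, abs_of_nonneg (by positivity : (0:ℝ) ≤ 3 * β ^ 3 / r ^ 5),
      abs_of_nonneg (sq_nonneg p)]
    have hp2 : p ^ 2 ≤ (c * V) ^ 2 := by rw [← sq_abs]; exact pow_le_pow_left₀ hp0 hp 2
    calc 3 * β ^ 3 / r ^ 5 * p ^ 2 * |q| ≤ 3 * β ^ 3 / r ^ 5 * ((c * V) ^ 2) * (N * c) := by
          gcongr
    _ = 3 * β ^ 3 * c ^ 3 / r ^ 5 * (N * V ^ 2) := by field_simp
  have e2 : |β ^ 2 / r ^ 3 * V ^ 2 * q| ≤ β ^ 2 * c / r ^ 3 * (N * V ^ 2) := by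
    rw [abs_mul, abs_mul, abs_of_nonneg (by positivity : (0:ℝ) ≤ β ^ 2 / r ^ 3),
      abs_of_nonneg (sq_nonneg V)]
    calc β ^ 2 / r ^ 3 * V ^ 2 * |q| ≤ β ^ 2 / r ^ 3 * V ^ 2 * (N * c) := by gcongr
    _ = β ^ 2 * c / r ^ 3 * (N * V ^ 2) := by field_simp
  have e3 : |2 * β ^ 2 / r ^ 3 * (p * u)| ≤ 2 * (β ^ 2 * c / r ^ 3) * (N * V ^ 2) := by
    rw [abs_mul, abs_mul, abs_of_nonneg (by positivity : (0:ℝ) ≤ 2 * β ^ 2 / r ^ 3)]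
    calc 2 * β ^ 2 / r ^ 3 * (|p| * |u|) ≤ 2 * β ^ 2 / r ^ 3 * ((c * V) * (N * V)) := by
          gcongr
    _ = 2 * (β ^ 2 * c / r ^ 3) * (N * V ^ 2) := by field_simp
  have hcore := aux_core hβ hc
  rw [← hr] at hcore
  have hmul := mul_le_mul_of_nonneg_right hcore
    (show (0:ℝ) ≤ N * V ^ 2 by positivity)
  refine le_trans habs ?_
  calc |3 * β ^ 3 / r ^ 5 * p ^ 2 * q| + |β ^ 2 / r ^ 3 * V ^ 2 * q|
        + |2 * β ^ 2 / r ^ 3 * (p * u)|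
        ≤ (3 * β ^ 3 * c ^ 3 / r ^ 5 + 3 * β ^ 2 * c / r ^ 3) * (N * V ^ 2) := by
        have : β ^ 2 * c / r ^ 3 * (N * V ^ 2) + 2 * (β ^ 2 * c / r ^ 3) * (N * V ^ 2)
            = 3 * β ^ 2 * c / r ^ 3 * (N * V ^ 2) := by ring
        nlinarith [e1, e2, e3]
    _ ≤ 3 * (β * Real.sqrt β) * (N * V ^ 2) := hmul
    _ = 3 * (β * Real.sqrt β) * N * V ^ 2 := by ring

section
variable {E : Type*} [NormedAddCommGroup E] [InnerProductSpace ℝ E]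

lemma aux_B_bound (a e : E) {α β : ℝ} (hβ : 0 < β) (x v : E) :
    |auxB a e α β x v v - 2 * α * ‖v‖ ^ 2| ≤ 3 * (β * Real.sqrt β) * ‖e‖ * ‖v‖ ^ 2 := by
  rw [aux_Bvv]
  have hvv : ⟪v, v⟫ = ‖v‖ ^ 2 := real_inner_self_eq_norm_sq v
  have hxx : ⟪x, x⟫ = ‖x‖ ^ 2 := real_inner_self_eq_norm_sq x
  have h := aux_est (β := β) (c := ‖x‖) (r := Real.sqrt (1 + β * ‖x‖ ^ 2)) (N := ‖e‖)
    (V := ‖v‖) (p := ⟪x, v⟫) (q := ⟪e, x⟫) (u := ⟪e, v⟫) hβ (norm_nonneg x) rfl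
    (norm_nonneg e) (norm_nonneg v)
    (abs_real_inner_le_norm x v) (abs_real_inner_le_norm e x) (abs_real_inner_le_norm e v)
  refine le_trans (le_of_eq ?_) h
  congr 1
  simp only [auxH1, auxH2, hxx, hvv]
  ring
end

/-- For `f(x) = ⟨a,x⟩ + α⟨x,x⟩ + (β/√(1+β⟨x,x⟩))⟨e,x⟩` with `e` the all-ones vector and
`2α > 3β^{3/2}√n`, the Hessian satisfies
`(2α − 3β^{3/2}√n)‖v‖² ≤ ⟨∇²f(x)v, v⟩ ≤ (2α + 3β^{3/2}√n)‖v‖²` on the nonnegative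
orthant; consequently `f` is `M`-strongly convex there with `M = 2α − 3β^{3/2}√n > 0`. -/
theorem hessian_bounds_example (n : ℕ) (hn : 1 ≤ n)
    (e : EuclideanSpace ℝ (Fin n)) (he : ∀ i, e i = 1)
    (α β : ℝ) (hα : 0 < α) (hβ : 0 < β)
    (hαβ : 3 * β ^ ((3 : ℝ) / 2) * Real.sqrt n < 2 * α)
    (a : EuclideanSpace ℝ (Fin n))
    (f : EuclideanSpace ℝ (Fin n) → ℝ)
    (hf : ∀ z : EuclideanSpace ℝ (Fin n),
      f z = ⟪a, z⟫ + α * ⟪z, z⟫ + (β / Real.sqrt (1 + β * ⟪z, z⟫)) * ⟪e, z⟫)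
    (M : ℝ) (hM : M = 2 * α - 3 * β ^ ((3 : ℝ) / 2) * Real.sqrt n) :
    (∀ x : EuclideanSpace ℝ (Fin n), (∀ i, 0 ≤ x i) →
      ∀ v : EuclideanSpace ℝ (Fin n),
        M * ‖v‖ ^ 2 ≤ iteratedFDeriv ℝ 2 f x ![v, v] ∧
        iteratedFDeriv ℝ 2 f x ![v, v]
          ≤ (2 * α + 3 * β ^ ((3 : ℝ) / 2) * Real.sqrt n) * ‖v‖ ^ 2) ∧
    0 < M ∧
    (∀ x : EuclideanSpace ℝ (Fin n), (∀ i, 0 ≤ x i) →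
      ∀ y : EuclideanSpace ℝ (Fin n), (∀ i, 0 ≤ y i) →
      ∀ t : ℝ, 0 ≤ t → t ≤ 1 →
        f (t • x + (1 - t) • y)
          ≤ t * f x + (1 - t) * f y - M / 2 * t * (1 - t) * ‖x - y‖ ^ 2) := by
  have hfe : f = fun z => ⟪a, z⟫ + α * ⟪z, z⟫
      + (β / Real.sqrt (1 + β * ⟪z, z⟫)) * ⟪e, z⟫ := funext hf
  subst hfe
  have hen : ‖e‖ = Real.sqrt n := by
    rw [EuclideanSpace.norm_eq]
    simp [he]
  have hβ32 : 3 * β ^ ((3 : ℝ) / 2) * Real.sqrt n = 3 * (β * Real.sqrt β) * ‖e‖ := by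
    rw [hen]
    congr 1
    congr 1
    rw [Real.sqrt_eq_rpow, show ((3:ℝ)/2) = 1 + 1/2 by norm_num, Real.rpow_add hβ,
      Real.rpow_one]
  have key : ∀ x v : EuclideanSpace ℝ (Fin n),
      |auxB a e α β x v v - 2 * α * ‖v‖ ^ 2| ≤ 3 * β ^ ((3 : ℝ) / 2) * Real.sqrt n * ‖v‖ ^ 2 := by
    intro x v
    rw [hβ32]
    exact aux_B_bound a e hβ x v
  have hM0 : 0 < M := by rw [hM]; linarith
  refine ⟨?_, hM0, ?_⟩
  · intro x _ v
    rw [aux_iterated a e α β hβ x v]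
    have h := abs_le.1 (key x v)
    constructor
    · rw [hM]; nlinarith [h.1]
    · nlinarith [h.2]
  · intro x hx y hy t ht ht1
    set w := x - y with hw
    set g : ℝ → ℝ := fun s => (⟪a, y + s • w⟫ + α * ⟪y + s • w, y + s • w⟫
      + (β / Real.sqrt (1 + β * ⟪y + s • w, y + s • w⟫)) * ⟪e, y + s • w⟫)
      - M / 2 * ‖w‖ ^ 2 * s ^ 2 with hg
    have hline : ∀ s : ℝ, HasDerivAt (fun s : ℝ => y + s • w) w s := by
      intro s
      simpa using ((hasDerivAt_id s).smul_const w).const_add y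
    have hsq : ∀ s : ℝ, HasDerivAt (fun s : ℝ => M / 2 * ‖w‖ ^ 2 * s ^ 2)
        (M * ‖w‖ ^ 2 * s) s := by
      intro s
      have h := (hasDerivAt_pow 2 s).const_mul (M / 2 * ‖w‖ ^ 2)
      convert h using 1
      any_goals rfl
      push_cast
      ring
    have hψ : ∀ s : ℝ, HasDerivAt g
        (auxDg a e α β (y + s • w) w - M * ‖w‖ ^ 2 * s) s := by
      intro s
      exact ((aux_hasFDerivAt_g a e α β hβ (y + s • w)).comp_hasDerivAt s (hline s)).sub (hsq s)
    have hderiv_g : deriv g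
        = fun s => auxDg a e α β (y + s • w) w - M * ‖w‖ ^ 2 * s :=
      funext fun s => (hψ s).deriv
    have hψ2 : ∀ s : ℝ, HasDerivAt (deriv g)
        (auxB a e α β (y + s • w) w w - M * ‖w‖ ^ 2) s := by
      intro s
      rw [hderiv_g]
      have h1 :=
        (aux_hasFDerivAt_Dg a e α β hβ (y + s • w)).comp_hasDerivAt s (hline s)
      have h2 := (ContinuousLinearMap.apply ℝ ℝ w).hasFDerivAt.comp_hasDerivAt s h1
      have h3 : HasDerivAt (fun s : ℝ => M * ‖w‖ ^ 2 * s) (M * ‖w‖ ^ 2) s := by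
        simpa using (hasDerivAt_id s).const_mul (M * ‖w‖ ^ 2)
      exact (h2.sub h3)
    have hdiff : Differentiable ℝ g := fun s => (hψ s).differentiableAt
    have hdiff2 : Differentiable ℝ (deriv g) := fun s => (hψ2 s).differentiableAt
    have hnonneg : ∀ s ∈ interior (Set.univ : Set ℝ), 0 ≤ deriv^[2] g s := by
      intro s _
      have h2 : deriv^[2] g s = deriv (deriv g) s := rfl
      rw [h2, (hψ2 s).deriv]
      have h := (abs_le.1 (key (y + s • w) w)).1
      rw [hM]
      nlinarith [h]
    have hconv : ConvexOn ℝ Set.univ g :=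
      convexOn_of_deriv2_nonneg convex_univ hdiff.continuous.continuousOn
        hdiff.differentiableOn hdiff2.differentiableOn hnonneg
    have hc := hconv.2 (Set.mem_univ (1:ℝ)) (Set.mem_univ (0:ℝ)) ht (by linarith : 0 ≤ 1 - t)
      (by ring)
    simp only [smul_eq_mul, mul_one, mul_zero, add_zero] at hc
    have hz1 : y + (1:ℝ) • w = x := by rw [hw]; module
    have hz0 : y + (0:ℝ) • w = y := by rw [hw]; module
    have hzt : y + t • w = t • x + (1 - t) • y := by rw [hw]; module
    rw [hg] at hc
    simp only [hz1, hz0, hzt] at hc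
    have hnw : ‖w‖ = ‖x - y‖ := by rw [hw]
    rw [← hzt] at *
    nlinarith [hc]
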